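/- Let P be a finite bounded poset with an RFAS Ω. If m is a maximal chain of P with m ≠ c({0̂},0̂,1̂), then there exists a finite sequence of maximal chains c({0̂},0̂,1̂) → m₁ → m₂ → ⋯ → m. -/

import Mathlib

open scoped Classical

variable {P : Type*} [PartialOrder P] [BoundedOrder P]

/-- `CoverList l` : consecutive entries of `l` are cover relations. -/
def CoverList : List P → Prop
  | x :: y :: t => x ⋖ y ∧ CoverList (y :: t)
  | _ => True

/-- `SatFromTo l x y` : `l` is a saturated chain (i.e. a maximal chain of the interval
`[x,y]`) starting at `x` and ending at `y`. -/
def SatFromTo (l : List P) (x y : P) : Prop :=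
  l ≠ [] ∧ l.head? = some x ∧ l.getLast? = some y ∧ CoverList l

/-- `m` is a maximal chain of the bounded poset `P`. -/
def MaxChainOfP (m : List P) : Prop := SatFromTo m ⊥ ⊤

/-- `r` is a root of `x`, i.e. a maximal chain of `[⊥, x]` (it contains `x`). -/
def RootOf (r : List P) (x : P) : Prop := SatFromTo r ⊥ x

/-- The label sequence of a chain (the second argument, which starts at the last
element of the root `r`) with respect to a chain-edge labeling `lab`. -/
def labelSeq {Λ : Type*} (lab : List P → P → P → Λ) : List P → List P → List Λ
  | r, x :: y :: t => lab r x y :: labelSeq lab (r ++ [y]) (y :: t)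
  | _, _ => []

/-- The pair of rooted cover relations `[u,v]_r`, `[v,w]_{r∪{v}}` is a topological
ascent: its label sequence lexicographically strictly precedes the label sequence of
every other maximal chain of `[u,w]_r`. -/
def TopAscent (lab : List P → P → P → ℤ) (r : List P) (u v w : P) : Prop :=
  ∀ c : List P, SatFromTo c u w → c ≠ [u, v, w] →
    List.Lex (· < ·) (labelSeq lab r [u, v, w]) (labelSeq lab r c)

/-- The chain (second argument) with root `r` is topologically ascending. -/
def TopAscending (lab : List P → P → P → ℤ) : List P → List P → Prop
  | r, u :: v :: w :: t => TopAscent lab r u v w ∧ TopAscending lab (r ++ [v]) (v :: w :: t)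
  | _, _ => True

/-- TCL-labeling : every rooted interval has a unique topologically ascending
maximal chain. -/
def IsTCLLabeling (lab : List P → P → P → ℤ) : Prop :=
  ∀ x y : P, x ≤ y → ∀ r : List P, RootOf r x →
    ∃! c : List P, SatFromTo c x y ∧ TopAscending lab r c

/-- CC-labeling : a TCL-labeling such that in every rooted interval distinct maximal
chains get distinct label sequences, none of which is a prefix of another. -/
def IsCCLabeling (lab : List P → P → P → ℤ) : Prop :=
  IsTCLLabeling lab ∧
    ∀ x y : P, x ≤ y → ∀ r : List P, RootOf r x →
      ∀ c c' : List P, SatFromTo c x y → SatFromTo c' x y → c ≠ c' →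
        ¬ labelSeq lab r c <+: labelSeq lab r c'

/-- CL-labeling with labels in an arbitrary poset `Λ`. -/
def IsCLLabeling {Λ : Type*} [PartialOrder Λ] (lab : List P → P → P → Λ) : Prop :=
  ∀ x y : P, x ≤ y → ∀ r : List P, RootOf r x →
    ∃ c : List P, (SatFromTo c x y ∧ List.Chain' (· < ·) (labelSeq lab r c)) ∧
      (∀ c' : List P, SatFromTo c' x y → List.Chain' (· < ·) (labelSeq lab r c') → c' = c) ∧
      (∀ c' : List P, SatFromTo c' x y → c' ≠ c →
        List.Lex (· < ·) (labelSeq lab r c) (labelSeq lab r c'))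

def TCLShellable (P : Type*) [PartialOrder P] [BoundedOrder P] : Prop :=
  ∃ lab : List P → P → P → ℤ, IsTCLLabeling lab

def CCShellable (P : Type*) [PartialOrder P] [BoundedOrder P] : Prop :=
  ∃ lab : List P → P → P → ℤ, IsCCLabeling lab

def CLShellable (P : Type*) [PartialOrder P] [BoundedOrder P] : Prop :=
  ∃ (Λ : Type) (_ : PartialOrder Λ) (lab : List P → P → P → Λ), IsCLLabeling lab

/-- `P` is graded : all maximal chains of `P` have the same length. -/
def Graded (P : Type*) [PartialOrder P] [BoundedOrder P] : Prop :=
  ∀ c c' : List P, MaxChainOfP c → MaxChainOfP c' → c.length = c'.length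

/-- `Γ` is a total order `m₁, …, m_t` on the maximal chains of `P`. -/
def Enumerates (Γ : List (List P)) : Prop :=
  Γ.Nodup ∧ ∀ m : List P, m ∈ Γ ↔ MaxChainOfP m

/-- `Γ` is a total order on the maximal chains which agrees with (is consistent with)
the lexicographic order on maximal chains induced by `lab`. -/
def AgreesWithLex (lab : List P → P → P → ℤ) (Γ : List (List P)) : Prop :=
  Enumerates Γ ∧ ∀ i j : ℕ, i < j → j < Γ.length →
    ¬ List.Lex (· < ·) (labelSeq lab [(⊥ : P)] (Γ.getD j []))
        (labelSeq lab [(⊥ : P)] (Γ.getD i []))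

/-- Position in `Γ` of the earliest maximal chain containing all elements of `l`. -/
noncomputable def fidx (Γ : List (List P)) (l : List P) : ℕ :=
  Γ.findIdx fun m => decide (∀ a ∈ l, a ∈ m)

/-- `a'` witnesses that the earliest chain containing `r ∪ {a}` is "sandwiched" by
two chains containing `r ∪ {a'}`. -/
def Sandwiched (Γ : List (List P)) (r : List P) (x a a' : P) : Prop :=
  x ⋖ a' ∧ fidx Γ (r ++ [a']) < fidx Γ (r ++ [a]) ∧
    ∃ l : ℕ, fidx Γ (r ++ [a]) < l ∧ l < Γ.length ∧ ∀ w ∈ r ++ [a'], w ∈ Γ.getD l []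

/-- The label (a position in `Γ`) that the CE-labeling determined by the total order
`Γ` assigns to the rooted cover relation `[x,a]_r`. -/
noncomputable def detLabel (Γ : List (List P)) (r : List P) (x a : P) : ℕ :=
  if h : ∃ n : ℕ, ∃ a' : P, Sandwiched Γ r x a a' ∧ fidx Γ (r ++ [a']) = n then
    detLabel Γ r x (Nat.find_spec h).choose
  else fidx Γ (r ++ [a])
termination_by fidx Γ (r ++ [a])
decreasing_by exact ((Nat.find_spec h).choose_spec).1.2.1

/-- The CE-labeling of `P` determined by the total order `Γ` on maximal chains. -/
noncomputable def detLabeling (Γ : List (List P)) : List P → P → P → ℤ :=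
  fun r x a => (detLabel Γ r x a : ℤ)

/-- `Ω` is a recursive first atom set (RFAS) for `P`. -/
def IsRFAS (Ω : List P → P → P → P) : Prop :=
  (∀ c : List P, CoverList c → c.length ≤ 2) ∨
    ∀ x y : P, x < y → ∀ r : List P, RootOf r x →
      (x ⋖ Ω r x y ∧ Ω r x y ≤ y) ∧
      ∀ a : P, x ⋖ a → a < y →
        (a = Ω r x y ↔ a = Ω r x (Ω (r ++ [a]) a y)) ∧
        (a ≠ Ω r x y →
          ∃ (p : ℕ) (A B : ℕ → P), 1 ≤ p ∧
            (∀ i, 1 ≤ i → i ≤ p → x ⋖ A i ∧ A i ≤ y) ∧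
            A p = Ω r x (Ω (r ++ [a]) a y) ∧ A 1 = Ω r x y ∧
            ∀ i, 1 ≤ i → i ≤ p - 1 →
              B i = Ω (r ++ [A (i + 1)]) (A (i + 1)) y ∧ A i = Ω r x (B i))

/-- The chain (second argument, a saturated chain from the last element of the root to
`y`) is the first atom chain `c(r, x, y)` of the rooted interval with top `y`:
each step except possibly the last follows the first atoms of `Ω`. -/
def IsFAC (Ω : List P → P → P → P) (y : P) : List P → List P → Prop
  | r, x :: z :: t => (t ≠ [] → z = Ω r x y) ∧ IsFAC Ω y (r ++ [z]) (z :: t)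
  | _, _ => True

/-- The chain (second argument) with root `r` contains a pseudo descent with respect
to `Ω`. -/
def HasPseudoDescent (Ω : List P → P → P → P) : List P → List P → Prop
  | r, u :: v :: w :: t => v ≠ Ω r u w ∨ HasPseudoDescent Ω (r ++ [v]) (v :: w :: t)
  | _, _ => False

/-- `m → m'` : `m` is obtained from the maximal chain `m'` by replacing a pseudo
descent `x ⋖ y ⋖ z` of `m'` with the first atom chain `c(m^x, x, z)`. -/
def StepRel (Ω : List P → P → P → P) (m m' : List P) : Prop :=
  MaxChainOfP m ∧ MaxChainOfP m' ∧
    ∃ (x y z : P) (r d c : List P),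
      RootOf r x ∧ x ⋖ y ∧ y ⋖ z ∧ y ≠ Ω r x z ∧
      m' = r ++ y :: z :: d ∧
      SatFromTo c x z ∧ IsFAC Ω z r c ∧
      m = r ++ c.tail ++ d

/-- `Γ` is a linear extension of the partial order `⪯` (the reflexive-transitive
closure of `→`) on the maximal chains of `P`. -/
def LinExtOf (Ω : List P → P → P → P) (Γ : List (List P)) : Prop :=
  Enumerates Γ ∧ ∀ i j : ℕ, i < Γ.length → j < Γ.length →
    Relation.ReflTransGen (StepRel Ω) (Γ.getD i []) (Γ.getD j []) → i ≤ j

/-- `Γ`, a total order on the facets (maximal chains) of the order complex `Δ(P)`,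
is a shelling order: for each `j` the intersection of the `j`-th facet with the union
of the earlier ones is pure of dimension one less than that of the `j`-th facet. -/
def IsShelling (Γ : List (List P)) : Prop :=
  ∀ j : ℕ, 0 < j → j < Γ.length → ∀ S : Finset P,
    S ⊆ (Γ.getD j []).toFinset → (∃ i < j, S ⊆ (Γ.getD i []).toFinset) →
    ∃ T : Finset P, S ⊆ T ∧ T ⊆ (Γ.getD j []).toFinset ∧
      (∃ i < j, T ⊆ (Γ.getD i []).toFinset) ∧
      T.card + 1 = (Γ.getD j []).toFinset.card

/-- Condition (LC) for a linear extension `Γ` of `⪯`. -/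
def LCCondition (Γ : List (List P)) : Prop :=
  ∀ i j k : ℕ, i < j → j < k → k < Γ.length →
    ∀ (r : List P) (x y y' z : P), RootOf r x → x ⋖ y → y ⋖ z → x ⋖ y' →
      (∀ w ∈ r ++ [y, z], w ∈ Γ.getD i []) →
      (∀ w ∈ r ++ [y, z], w ∈ Γ.getD k []) →
      (∀ w ∈ r ++ [y'], w ∈ Γ.getD j []) → y' = y

/-- `Ω` is a labeling-compatible recursive first atom set (LCRFAS). -/
def IsLCRFAS (Ω : List P → P → P → P) : Prop :=
  IsRFAS Ω ∧ ∃ Γ : List (List P), LinExtOf Ω Γ ∧ LCCondition Γ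

/-- The CE-labeling `lab` is compatible with the RFAS `Ω` : in every rooted interval
the first atom lies on a lexicographically smallest maximal chain. -/
def Compatible (lab : List P → P → P → ℤ) (Ω : List P → P → P → P) : Prop :=
  ∀ x y : P, x < y → ∀ r : List P, RootOf r x →
    ∃ c : List P, SatFromTo c x y ∧ Ω r x y ∈ c ∧
      ∀ c' : List P, SatFromTo c' x y →
        ¬ List.Lex (· < ·) (labelSeq lab r c') (labelSeq lab r c)

set_option linter.unusedSectionVars false

section Aux
lemma satFromTo_nil {x y : P} : ¬ SatFromTo ([] : List P) x y := fun h => h.1 rfl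

lemma satFromTo_singleton {w x y : P} : SatFromTo [w] x y ↔ w = x ∧ w = y := by
  constructor
  · rintro ⟨-, h1, h2, -⟩
    simp at h1 h2
    exact ⟨h1, h2⟩
  · rintro ⟨rfl, rfl⟩
    exact ⟨by simp, by simp, by simp, trivial⟩

lemma satFromTo_cons_cons {w w' : P} {t : List P} {x y : P} :
    SatFromTo (w :: w' :: t) x y ↔ w = x ∧ w ⋖ w' ∧ SatFromTo (w' :: t) w' y := by
  constructor
  · rintro ⟨-, h1, h2, h3, h4⟩
    simp at h1
    exact ⟨h1, h3, by simp, rfl, by rw [← List.getLast?_cons_cons (a := w)]; exact h2, h4⟩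
  · rintro ⟨rfl, hc, -, -, h2, h4⟩
    exact ⟨by simp, by simp, by rw [List.getLast?_cons_cons]; exact h2, hc, h4⟩

lemma sat_head_cons_tail {l : List P} {x y : P} (h : SatFromTo l x y) : l = x :: l.tail := by
  rcases l with _ | ⟨w, t⟩
  · exact absurd h satFromTo_nil
  · obtain ⟨-, h1, -⟩ := h
    simp at h1
    rw [h1]; rfl

lemma satFromTo_glue {b y : P} : ∀ (u v : List P) {x : P},
    SatFromTo u x b → SatFromTo v b y → SatFromTo (u ++ v.tail) x y := by
  intro u
  induction u with
  | nil => exact fun v x h _ => absurd h satFromTo_nil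
  | cons w u ih =>
    rcases u with _ | ⟨w', u'⟩
    · intro v x h hv
      obtain ⟨rfl, rfl⟩ := satFromTo_singleton.mp h
      have hv' := sat_head_cons_tail hv
      simpa [← hv'] using hv
    · intro v x h hv
      obtain ⟨rfl, hc, h2⟩ := satFromTo_cons_cons.mp h
      have := ih v h2 hv
      exact satFromTo_cons_cons.mpr ⟨rfl, hc, this⟩

lemma rootOf_extend {r : List P} {x a : P} (hr : RootOf r x) (h : x ⋖ a) :
    RootOf (r ++ [a]) a := by
  have h2 : SatFromTo [x, a] x a :=
    satFromTo_cons_cons.mpr ⟨rfl, h, satFromTo_singleton.mpr ⟨rfl, rfl⟩⟩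
  have := satFromTo_glue _ _ hr h2
  simpa [RootOf] using this
end Aux

section FacDef
variable [Fintype P] (Ω : List P → P → P → P)

/-- The key (non-degenerate) condition of being an RFAS. -/
def RFASCond : Prop :=
  ∀ x y : P, x < y → ∀ r : List P, RootOf r x →
      (x ⋖ Ω r x y ∧ Ω r x y ≤ y) ∧
      ∀ a : P, x ⋖ a → a < y →
        (a = Ω r x y ↔ a = Ω r x (Ω (r ++ [a]) a y)) ∧
        (a ≠ Ω r x y →
          ∃ (p : ℕ) (A B : ℕ → P), 1 ≤ p ∧
            (∀ i, 1 ≤ i → i ≤ p → x ⋖ A i ∧ A i ≤ y) ∧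
            A p = Ω r x (Ω (r ++ [a]) a y) ∧ A 1 = Ω r x y ∧
            ∀ i, 1 ≤ i → i ≤ p - 1 →
              B i = Ω (r ++ [A (i + 1)]) (A (i + 1)) y ∧ A i = Ω r x (B i))

/-- Greedy first atom chain with fuel. -/
noncomputable def facAux (y : P) : ℕ → List P → P → List P
  | 0, _, x => [x]
  | n+1, r, x => if x = y then [x] else x :: facAux y n (r ++ [Ω r x y]) (Ω r x y)

/-- Number of elements strictly above `x`. -/
noncomputable def Ucard (x : P) : ℕ := (Finset.univ.filter fun w => x < w).card

lemma Ucard_lt {x a : P} (h : x < a) : Ucard a < Ucard x := by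
  refine Finset.card_lt_card ⟨fun w hw => ?_, fun hsub => ?_⟩
  · simp only [Finset.mem_filter, Finset.mem_univ, true_and] at hw ⊢
    exact h.trans hw
  · have := hsub (by simp [h] : a ∈ Finset.univ.filter fun w => x < w)
    simp at this

variable {Ω}

lemma facAux_spec (hΩ : RFASCond Ω) (y : P) :
    ∀ n : ℕ, ∀ x : P, ∀ r : List P, Ucard x < n → x ≤ y → RootOf r x →
    SatFromTo (facAux Ω y n r x) x y ∧ IsFAC Ω y r (facAux Ω y n r x) ∧
    (∀ n', Ucard x < n' → facAux Ω y n' r x = facAux Ω y n r x) := by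
  intro n
  induction n with
  | zero => intro x r h; omega
  | succ n ih =>
    intro x r hn hxy hr
    by_cases hxy' : x = y
    · subst hxy'
      refine ⟨by simp [facAux, satFromTo_singleton], by simp [facAux, IsFAC], ?_⟩
      intro n' hn'
      rcases n' with _ | n'
      · omega
      · simp [facAux]
    · have hlt : x < y := lt_of_le_of_ne hxy hxy'
      obtain ⟨hcov, hle⟩ := (hΩ x y hlt r hr).1
      have hU : Ucard (Ω r x y) < n := by
        have := Ucard_lt hcov.lt; omega
      have hroot : RootOf (r ++ [Ω r x y]) (Ω r x y) := rootOf_extend hr hcov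
      obtain ⟨ihsat, ihfac, ihfuel⟩ := ih (Ω r x y) (r ++ [Ω r x y]) hU hle hroot
      have hunf : facAux Ω y (n+1) r x = x :: facAux Ω y n (r ++ [Ω r x y]) (Ω r x y) := by
        simp [facAux, hxy']
      have hshape := sat_head_cons_tail ihsat
      refine ⟨?_, ?_, ?_⟩
      · rw [hunf, hshape]
        exact satFromTo_cons_cons.mpr ⟨rfl, hcov, hshape ▸ ihsat⟩
      · rw [hunf, hshape]
        exact ⟨fun _ => rfl, hshape ▸ ihfac⟩
      · intro n' hn'
        rcases n' with _ | n'
        · omega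
        · have h1 : facAux Ω y (n'+1) r x
              = x :: facAux Ω y n' (r ++ [Ω r x y]) (Ω r x y) := by simp [facAux, hxy']
          rw [h1, hunf, ihfuel n' (by have := Ucard_lt hcov.lt; omega)]

/-- The greedy first atom chain of the rooted interval `[x,y]_r`. -/
noncomputable def fac (Ω' : List P → P → P → P) (y : P) (r : List P) (x : P) : List P :=
  facAux Ω' y (Ucard x + 1) r x

lemma fac_sat (hΩ : RFASCond Ω) {y x : P} {r : List P} (hxy : x ≤ y) (hr : RootOf r x) :
    SatFromTo (fac Ω y r x) x y :=
  (facAux_spec hΩ y (Ucard x + 1) x r (by omega) hxy hr).1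

lemma fac_isFAC (hΩ : RFASCond Ω) {y x : P} {r : List P} (hxy : x ≤ y) (hr : RootOf r x) :
    IsFAC Ω y r (fac Ω y r x) :=
  (facAux_spec hΩ y (Ucard x + 1) x r (by omega) hxy hr).2.1

lemma fac_self {y : P} (r : List P) : fac Ω y r y = [y] := by
  simp [fac, facAux]

lemma fac_cons (hΩ : RFASCond Ω) {y x : P} {r : List P} (hlt : x < y) (hr : RootOf r x) :
    fac Ω y r x = x :: fac Ω y (r ++ [Ω r x y]) (Ω r x y) := by
  have hne : x ≠ y := hlt.ne
  obtain ⟨hcov, hle⟩ := (hΩ x y hlt r hr).1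
  have h1 : fac Ω y r x = x :: facAux Ω y (Ucard x) (r ++ [Ω r x y]) (Ω r x y) := by
    simp [fac, facAux, hne]
  rw [h1]
  congr 1
  exact ((facAux_spec hΩ y (Ucard (Ω r x y) + 1) (Ω r x y) (r ++ [Ω r x y])
    (by omega) hle (rootOf_extend hr hcov)).2.2 (Ucard x) (Ucard_lt hcov.lt))

end FacDef

section Main
variable [Fintype P] {Ω : List P → P → P → P}

lemma stepRel_of {r : List P} {x a b : P} (hr : RootOf r x) (hxa : x ⋖ a) (hab : a ⋖ b)
    (hne : a ≠ Ω r x b) {d c : List P} (hd : SatFromTo (b :: d) b ⊤)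
    (hc : SatFromTo c x b) (hcf : IsFAC Ω b r c) :
    StepRel Ω (r ++ c.tail ++ d) (r ++ a :: b :: d) := by
  have hm' : SatFromTo (x :: a :: b :: d) x ⊤ :=
    satFromTo_cons_cons.mpr ⟨rfl, hxa, satFromTo_cons_cons.mpr ⟨rfl, hab, hd⟩⟩
  have hM' : MaxChainOfP (r ++ a :: b :: d) := by
    have := satFromTo_glue r (x :: a :: b :: d) hr hm'
    simpa [MaxChainOfP] using this
  have hcd : SatFromTo (c ++ d) x ⊤ := by
    have := satFromTo_glue c (b :: d) hc hd
    simpa using this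
  have hM : MaxChainOfP (r ++ c.tail ++ d) := by
    have h2 := satFromTo_glue r (c ++ d) hr hcd
    have hc' : c = x :: c.tail := sat_head_cons_tail hc
    rw [hc'] at h2
    simpa [MaxChainOfP, List.append_assoc] using h2
  exact ⟨hM, hM', x, a, b, r, d, c, hr, hxa, hab, hne, rfl, hc, hcf, rfl⟩

/-- The canonical continuation chain below atom `u`. -/
noncomputable def Qch (Ω' : List P → P → P → P) (r : List P) (u : P) : List P :=
  r ++ [u] ++ (fac Ω' ⊤ (r ++ [u]) u).tail

lemma Qch_eq_fac (hΩ : RFASCond Ω) {x : P} {r : List P} (hlt : x < ⊤) (hr : RootOf r x) :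
    r ++ (fac Ω ⊤ r x).tail = Qch Ω r (Ω r x ⊤) := by
  rw [fac_cons hΩ hlt hr]
  have h2 := sat_head_cons_tail (fac_sat hΩ le_top
    (rootOf_extend hr ((hΩ x ⊤ hlt r hr).1.1)))
  rw [Qch, h2]
  simp

lemma G_aux (hΩ : RFASCond Ω) :
    ∀ (n : ℕ) (x : P) (r m : List P), Ucard x < n → RootOf r x → SatFromTo m x ⊤ →
    Relation.ReflTransGen (StepRel Ω) (r ++ (fac Ω ⊤ r x).tail) (r ++ m.tail) := by
  intro n
  induction n with
  | zero => intro x r m hn; omega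
  | succ n ih =>
    intro x r m hn hr hm
    rcases m with _ | ⟨w, _ | ⟨a, t⟩⟩
    · exact absurd hm satFromTo_nil
    · obtain ⟨rfl, htop⟩ := satFromTo_singleton.mp hm
      rw [← htop, fac_self]
    · obtain ⟨hwx, hxa, hm₂⟩ := satFromTo_cons_cons.mp hm
      rw [hwx] at hxa
      have hxtop : x < ⊤ := lt_of_lt_of_le hxa.lt le_top
      -- reach: from Qch to any chain hanging below an atom u
      have reach : ∀ (u : P) (s : List P), x ⋖ u → SatFromTo (u :: s) u ⊤ →
          Relation.ReflTransGen (StepRel Ω) (Qch Ω r u) (r ++ [u] ++ s) := by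
        intro u s hu hs
        have hU : Ucard u < n := by have := Ucard_lt hu.lt; omega
        have := ih u (r ++ [u]) (u :: s) hU (rootOf_extend hr hu) hs
        simpa [Qch, List.append_assoc] using this
      have hQfac : r ++ (fac Ω ⊤ r x).tail = Qch Ω r (Ω r x ⊤) := Qch_eq_fac hΩ hxtop hr
      have hgoal2 : r ++ (w :: a :: t).tail = r ++ [a] ++ t := by simp
      rw [hgoal2, hQfac]
      by_cases hcase : a = Ω r x ⊤
      · rw [← hcase]
        exact reach a t hxa hm₂
      · -- a is not the first atom
        have hatop : a < ⊤ := by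
          rcases lt_or_eq_of_le (le_top : a ≤ ⊤) with h | h
          · exact h
          · exfalso
            obtain ⟨hcov', hle'⟩ := (hΩ x ⊤ hxtop r hr).1
            have hxt : x ⋖ ⊤ := h ▸ hxa
            have : Ω r x ⊤ = ⊤ := by
              rcases lt_or_eq_of_le hle' with h2 | h2
              · exact absurd h2 (hxt.2 hcov'.lt)
              · exact h2
            exact hcase (h.trans this.symm)
        have hnxt : ¬ x ⋖ ⊤ := fun h => h.2 hxa.lt hatop
        have hra : RootOf (r ++ [a]) a := rootOf_extend hr hxa
        obtain ⟨hab, hbtop⟩ := (hΩ a ⊤ hatop (r ++ [a]) hra).1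
        set b := Ω (r ++ [a]) a ⊤ with hbdef
        have hiff := ((hΩ x ⊤ hxtop r hr).2 a hxa hatop).1
        have hanb : a ≠ Ω r x b := fun h => hcase (hiff.mpr h)
        have hxb : x < b := hxa.lt.trans hab.lt
        -- the structure of Qch at any atom u: helper producing the step
        have stepQ : ∀ u v : P, x ⋖ u → u < ⊤ → v = Ω r x (Ω (r ++ [u]) u ⊤) → u ≠ v →
            ∃ N : List P, StepRel Ω N (Qch Ω r u) ∧
              Relation.ReflTransGen (StepRel Ω) (Qch Ω r v) N := by
          intro u v hu hutop hv huv
          have hru : RootOf (r ++ [u]) u := rootOf_extend hr hu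
          obtain ⟨huB, hBtop⟩ := (hΩ u ⊤ hutop (r ++ [u]) hru).1
          set Bi := Ω (r ++ [u]) u ⊤ with hBidef
          have hxBi : x < Bi := hu.lt.trans huB.lt
          -- Qch r u = r ++ u :: Bi :: dᵢ
          have hfu : fac Ω ⊤ (r ++ [u]) u = u :: fac Ω ⊤ (r ++ [u] ++ [Bi]) Bi :=
            fac_cons hΩ hutop hru
          have hfB := sat_head_cons_tail (fac_sat hΩ le_top (rootOf_extend hru huB))
          set di := (fac Ω ⊤ (r ++ [u] ++ [Bi]) Bi).tail with hdidef
          have hQu : Qch Ω r u = r ++ u :: Bi :: di := by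
            rw [Qch, hfu]
            rw [hfB]
            simp
          have hdsat : SatFromTo (Bi :: di) Bi ⊤ := by
            rw [← hfB]; exact fac_sat hΩ le_top (rootOf_extend hru huB)
          -- the step
          have hstep : StepRel Ω (r ++ (fac Ω Bi r x).tail ++ di) (r ++ u :: Bi :: di) :=
            stepRel_of hr hu huB (hv ▸ Ne.symm (fun h => huv h.symm) : u ≠ Ω r x Bi) hdsat
              (fac_sat hΩ hxBi.le hr) (fac_isFAC hΩ hxBi.le hr)
          refine ⟨r ++ (fac Ω Bi r x).tail ++ di, by rw [hQu]; exact hstep, ?_⟩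
          -- N = r ++ [v] ++ (fv.tail ++ di)
          obtain ⟨hxv', hvB⟩ : x ⋖ Ω r x Bi ∧ Ω r x Bi ≤ Bi := (hΩ x Bi hxBi r hr).1
          have hfc : fac Ω Bi r x = x :: fac Ω Bi (r ++ [Ω r x Bi]) (Ω r x Bi) :=
            fac_cons hΩ hxBi hr
          rw [hfc]
          rw [← hv] at hxv' hvB hfc ⊢
          set fv := fac Ω Bi (r ++ [v]) v with hfvdef
          have hfvsat : SatFromTo fv v Bi := fac_sat hΩ hvB (rootOf_extend hr hxv')
          have hsatv : SatFromTo (fv ++ di) v ⊤ := by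
            have := satFromTo_glue fv (Bi :: di) hfvsat hdsat
            simpa using this
          have hfvshape := sat_head_cons_tail hfvsat
          have hfvshape' : fv ++ di = v :: (fv.tail ++ di) := by
            conv_lhs => rw [hfvshape]
            rfl
          have hsatv2 : SatFromTo (v :: (fv.tail ++ di)) v ⊤ := by
            rw [← hfvshape']; exact hsatv
          have hreach := reach v (fv.tail ++ di) hxv' hsatv2
          have heq : r ++ [v] ++ (fv.tail ++ di) = r ++ (x :: fv).tail ++ di := by
            rw [List.tail_cons, hfvshape]; simp
          rw [← heq]
          exact hreach
        obtain ⟨p, A, B, hp, hAatom, hAp, hA1, hB⟩ :=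
          ((hΩ x ⊤ hxtop r hr).2 a hxa hatop).2 hcase
        have key : ∀ i, 1 ≤ i → i ≤ p →
            Relation.ReflTransGen (StepRel Ω) (Qch Ω r (A 1)) (Qch Ω r (A i)) := by
          intro i
          induction i with
          | zero => omega
          | succ i ihi =>
            intro h1 hip
            by_cases hi0 : i = 0
            · subst hi0; exact Relation.ReflTransGen.refl
            · have hBi := hB i (by omega) (by omega)
              have prev := ihi (by omega) (by omega)
              have hu : x ⋖ A (i+1) ∧ A (i+1) ≤ ⊤ := hAatom (i+1) (by omega) hip
              have hutop : A (i+1) < ⊤ :=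
                lt_of_le_of_ne hu.2 (fun h2 => hnxt (h2 ▸ hu.1))
              have hveq : A i = Ω r x (Ω (r ++ [A (i+1)]) (A (i+1)) ⊤) := by
                rw [← hBi.1]; exact hBi.2
              by_cases huv : A (i+1) = A i
              · rw [huv]; exact prev
              · obtain ⟨N, hstepN, hreachN⟩ := stepQ (A (i+1)) (A i) hu.1 hutop hveq huv
                exact prev.trans (hreachN.tail hstepN)
        have hkey := key p hp le_rfl
        rw [hA1] at hkey
        have hana : a ≠ A p := fun h => hanb (h.trans hAp)
        obtain ⟨N, hstepN, hreachN⟩ := stepQ a (A p) hxa hatop hAp hana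
        exact (hkey.trans (hreachN.tail hstepN)).trans (reach a t hxa hm₂)
end Main


/-- Proposition 5.10: for any maximal chain `m` which is not the first atom chain
`c({⊥},⊥,⊤)` there is a sequence `c({⊥},⊥,⊤) → m₁ → m₂ → ⋯ → m`. -/
theorem stmt12 {P : Type*} [PartialOrder P] [BoundedOrder P] [Fintype P]
    (Ω : List P → P → P → P) (hΩ : IsRFAS Ω)
    (m : List P) (hm : MaxChainOfP m) (hne : ¬ IsFAC Ω ⊤ [(⊥ : P)] m) :
    ∃ c : List P, MaxChainOfP c ∧ IsFAC Ω ⊤ [(⊥ : P)] c ∧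
      Relation.TransGen (StepRel Ω) c m := by
  rcases hΩ with hlen | hΩ2
  · exfalso
    obtain ⟨hne', hhead, hlast, hcov⟩ := hm
    have hl := hlen m hcov
    rcases m with _ | ⟨w, _ | ⟨w2, _ | ⟨w3, t⟩⟩⟩
    · exact hne' rfl
    · exact hne trivial
    · exact hne ⟨fun h => absurd rfl h, trivial⟩
    · simp at hl
  · have hΩ' : RFASCond Ω := hΩ2
    have hroot : RootOf [(⊥ : P)] ⊥ := satFromTo_singleton.mpr ⟨rfl, rfl⟩
    have hsat : SatFromTo (fac Ω ⊤ [(⊥ : P)] ⊥) ⊥ ⊤ := fac_sat hΩ' le_top hroot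
    have hfacF : IsFAC Ω ⊤ [(⊥ : P)] (fac Ω ⊤ [(⊥ : P)] ⊥) := fac_isFAC hΩ' le_top hroot
    refine ⟨fac Ω ⊤ [(⊥ : P)] ⊥, hsat, hfacF, ?_⟩
    have hG := G_aux hΩ' (Ucard (⊥ : P) + 1) ⊥ [(⊥ : P)] m (by omega) hroot hm
    have h1 : [(⊥ : P)] ++ (fac Ω ⊤ [(⊥ : P)] ⊥).tail = fac Ω ⊤ [(⊥ : P)] ⊥ := by
      conv_rhs => rw [sat_head_cons_tail hsat]
      rfl
    have h2 : [(⊥ : P)] ++ m.tail = m := by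
      conv_rhs => rw [sat_head_cons_tail hm]
      rfl
    rw [h1, h2] at hG
    have hnefac : fac Ω ⊤ [(⊥ : P)] ⊥ ≠ m := fun h => hne (h ▸ hfacF)
    rcases hG.cases_head with h | ⟨c', hc', hG'⟩
    · exact absurd h hnefac
    · exact Relation.TransGen.head' hc' hG'
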